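/- Let E be a regular expression over an alphabet Σ. Then there exist a monoid M with finitely many elements, a monoid homomorphism α from the free monoid on Σ (words under concatenation) to M, and a subset S ⊆ M such that for every word w over Σ, w ∈ L(E) if and only if α(w) ∈ S. -/

import Mathlib

open Computability MulOpposite


instance myFinEnd {X : Type} [Finite X] : Finite (Function.End X) :=
  Finite.of_equiv (X → X) (Equiv.refl _)
instance myFinOp {X : Type} [Finite X] : Finite Xᵐᵒᵖ := Finite.of_equiv X MulOpposite.opEquiv

def Recog {α : Type} (L : Language α) : Prop :=
  ∃ (M : MonCat.{0}) (_ : Finite M) (φ : FreeMonoid α →* M) (S : Set M),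
    ∀ w : List α, w ∈ L ↔ φ (FreeMonoid.ofList w) ∈ S

def nfaHom {α σ : Type} (N : NFA α σ) : FreeMonoid α →* (Function.End (Set σ))ᵐᵒᵖ :=
  FreeMonoid.lift (fun a => op (fun T => N.stepSet T a : Function.End (Set σ)))

lemma nfaHom_apply {α σ : Type} (N : NFA α σ) (w : List α) (T : Set σ) :
    unop (nfaHom N (FreeMonoid.ofList w)) T = N.evalFrom T w := by
  induction w generalizing T with
  | nil => rfl
  | cons a w ih =>
    rw [FreeMonoid.ofList_cons, map_mul, unop_mul]
    exact ih (N.stepSet T a)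

lemma nfa_recog {α σ : Type} [Finite σ] (N : NFA α σ) : Recog N.accepts := by
  refine ⟨MonCat.of (Function.End (Set σ))ᵐᵒᵖ,
    (inferInstance : Finite ((Function.End (Set σ))ᵐᵒᵖ)),
    nfaHom N,
    {f | ∃ q ∈ unop f N.start, q ∈ N.accept}, ?_⟩
  intro w
  rw [NFA.mem_accepts]
  constructor
  · rintro ⟨q, hq, he⟩
    rw [← nfaHom_apply N w N.start] at he
    exact ⟨q, he, hq⟩
  · rintro ⟨q, he, hq⟩
    refine ⟨q, hq, ?_⟩
    rw [← nfaHom_apply N w N.start]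
    exact he
lemma recog_zero {α : Type} : Recog (0 : Language α) :=
  ⟨MonCat.of PUnit, (inferInstance : Finite PUnit.{1}), 1, ∅, by simp⟩

lemma recog_plus {α : Type} {L₁ L₂ : Language α} (h₁ : Recog L₁) (h₂ : Recog L₂) :
    Recog (L₁ + L₂) := by
  obtain ⟨M₁, f₁, φ₁, S₁, hS₁⟩ := h₁
  obtain ⟨M₂, f₂, φ₂, S₂, hS₂⟩ := h₂
  refine ⟨MonCat.of (M₁ × M₂), (inferInstance : Finite (↥M₁ × ↥M₂)), φ₁.prod φ₂,
    {p | p.1 ∈ S₁ ∨ p.2 ∈ S₂}, fun w => ?_⟩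
  simp only [Language.mem_add, hS₁ w, hS₂ w]
  rfl
lemma nfa_evalFrom_empty {α σ : Type} (N : NFA α σ) (l : List α) : N.evalFrom ∅ l = ∅ := by
  induction l with
  | nil => rfl
  | cons a l ih => show N.evalFrom (N.stepSet ∅ a) l = ∅; rwa [NFA.stepSet_empty]

def epsNFA (α : Type) : NFA α PUnit.{1} := ⟨fun _ _ => ∅, Set.univ, Set.univ⟩

lemma epsNFA_accepts {α : Type} : (epsNFA α).accepts = (1 : Language α) := by
  ext w
  rw [NFA.mem_accepts, Language.mem_one]
  cases w with
  | nil => exact iff_of_true ⟨PUnit.unit, trivial, trivial⟩ rfl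
  | cons a l =>
    have h1 : (epsNFA α).stepSet Set.univ a = ∅ := by
      ext q; simp [NFA.mem_stepSet, epsNFA]
    have h3 : (epsNFA α).evalFrom (epsNFA α).start (a :: l) = ∅ := by
      show (epsNFA α).evalFrom ((epsNFA α).stepSet Set.univ a) l = ∅
      rw [h1]; exact nfa_evalFrom_empty _ l
    simp only [List.cons_ne_nil, iff_false]
    rintro ⟨q, hq, he⟩
    rw [h3] at he
    exact he

def charNFA {α : Type} (a : α) : NFA α Bool :=
  ⟨fun q b => {c | q = false ∧ b = a ∧ c = true}, {false}, {true}⟩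

lemma charNFA_accepts {α : Type} (a : α) : (charNFA a).accepts = ({[a]} : Language α) := by
  ext w
  rw [NFA.mem_accepts]
  constructor
  · rintro ⟨q, hq, he⟩
    match w with
    | [] =>
      simp only [NFA.evalFrom_nil] at he
      simp only [charNFA, Set.mem_singleton_iff] at hq he
      subst hq; cases he
    | [b] =>
      have hb : q ∈ (charNFA a).stepSet {false} b := he
      rw [NFA.mem_stepSet] at hb
      obtain ⟨t, ht, hs⟩ := hb
      simp only [charNFA, Set.mem_setOf_eq] at hs
      simp only [hs.2.1]; rfl
    | b :: c :: l =>
      exfalso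
      have h2 : (charNFA a).stepSet ((charNFA a).stepSet {false} b) c = ∅ := by
        rw [Set.eq_empty_iff_forall_notMem]
        intro q' hq'
        rw [NFA.mem_stepSet] at hq'
        obtain ⟨t, ht, hs⟩ := hq'
        rw [NFA.mem_stepSet] at ht
        obtain ⟨t', ht', hs'⟩ := ht
        have e1 : t = true := hs'.2.2
        have e0 : t = false := hs.1
        simp [e1] at e0
      have h3 : (charNFA a).evalFrom (charNFA a).start (b :: c :: l) = ∅ := by
        show (charNFA a).evalFrom ((charNFA a).stepSet ((charNFA a).stepSet {false} b) c) l = ∅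
        rw [h2]; exact nfa_evalFrom_empty _ l
      rw [h3] at he; exact he
  · intro hw
    change w = [a] at hw
    subst hw
    refine ⟨true, rfl, ?_⟩
    show true ∈ (charNFA a).stepSet {false} a
    rw [NFA.mem_stepSet]
    exact ⟨false, rfl, ⟨rfl, rfl, rfl⟩⟩

lemma ofList_nil' {α : Type} : FreeMonoid.ofList ([] : List α) = 1 := rfl
lemma ofList_app' {α : Type} (u v : List α) :
    FreeMonoid.ofList (u ++ v) = FreeMonoid.ofList u * FreeMonoid.ofList v := rfl
lemma ofList_sing' {α : Type} (a : α) : FreeMonoid.ofList [a] = FreeMonoid.of a := rfl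

section Comp
variable {α : Type} (M₁ M₂ : MonCat.{0}) (φ₁ : FreeMonoid α →* M₁) (φ₂ : FreeMonoid α →* M₂)
  (S₁ : Set M₁) (S₂ : Set M₂)

def compNFA : NFA α (M₁ ⊕ M₂) where
  step q a := match q with
    | .inl m => {p | p = .inl (m * φ₁ (.of a)) ∨ (m * φ₁ (.of a) ∈ S₁ ∧ p = .inr 1)}
    | .inr n => {p | p = .inr (n * φ₂ (.of a))}
  start := {p | p = .inl 1 ∨ ((1 : M₁) ∈ S₁ ∧ p = .inr 1)}
  accept := {p | ∃ n ∈ S₂, p = .inr n}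

lemma compNFA_eval (w : List α) :
    (compNFA M₁ M₂ φ₁ φ₂ S₁ S₂).eval w =
      {p | p = .inl (φ₁ (FreeMonoid.ofList w)) ∨
        ∃ u v, φ₁ (FreeMonoid.ofList u) ∈ S₁ ∧ u ++ v = w ∧
          p = .inr (φ₂ (FreeMonoid.ofList v))} := by
  induction w using List.reverseRecOn with
  | nil =>
    show (compNFA M₁ M₂ φ₁ φ₂ S₁ S₂).start = _
    ext p
    simp only [compNFA, Set.mem_setOf_eq, ofList_nil', map_one]
    constructor
    · rintro (rfl | ⟨h1, rfl⟩)
      · exact Or.inl rfl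
      · exact Or.inr ⟨[], [], by simpa [ofList_nil', map_one] using h1, rfl,
          by simp [ofList_nil', map_one]⟩
    · rintro (rfl | ⟨u, v, hu, huv, rfl⟩)
      · exact Or.inl rfl
      · rcases List.append_eq_nil_iff.mp huv with ⟨rfl, rfl⟩
        exact Or.inr ⟨by simpa [ofList_nil', map_one] using hu, by simp [ofList_nil', map_one]⟩
  | append_singleton w a ih =>
    rw [NFA.eval_append_singleton, ih]
    ext p
    rw [NFA.mem_stepSet]
    constructor
    · rintro ⟨t, ht, hp⟩
      simp only [Set.mem_setOf_eq] at ht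
      rcases ht with rfl | ⟨u, v, hu, huv, rfl⟩
      · rcases hp with rfl | ⟨hin, rfl⟩
        · exact Or.inl (by simp [ofList_app', map_mul, ofList_sing'])
        · refine Or.inr ⟨w ++ [a], [], ?_, by simp, by simp [ofList_nil', map_one]⟩
          simpa [ofList_app', map_mul, ofList_sing'] using hin
      · have hp' : p = Sum.inr (φ₂ (FreeMonoid.ofList v) * φ₂ (FreeMonoid.of a)) := hp
        refine Or.inr ⟨u, v ++ [a], hu, by rw [← List.append_assoc, huv], ?_⟩
        rw [hp', ofList_app', map_mul, ofList_sing']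
    · rintro (rfl | ⟨u, v, hu, huv, rfl⟩)
      · refine ⟨.inl (φ₁ (FreeMonoid.ofList w)), Or.inl rfl, Or.inl ?_⟩
        rw [ofList_app', map_mul, ofList_sing']
      · rcases List.eq_nil_or_concat v with rfl | ⟨v', b, rfl⟩
        · rw [List.append_nil] at huv
          refine ⟨.inl (φ₁ (FreeMonoid.ofList w)), Or.inl rfl, Or.inr ⟨?_, ?_⟩⟩
          · have e : φ₁ (FreeMonoid.ofList u) = φ₁ (FreeMonoid.ofList w) * φ₁ (FreeMonoid.of a) := by
              rw [huv, ofList_app', map_mul, ofList_sing']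
            rw [← e]; exact hu
          · simp [ofList_nil', map_one]
        · rw [List.concat_eq_append] at huv ⊢
          rw [← List.append_assoc] at huv
          obtain ⟨huv', hb⟩ := List.append_inj' huv rfl
          obtain rfl : a = b := by simpa using hb.symm
          refine ⟨.inr (φ₂ (FreeMonoid.ofList v')), Or.inr ⟨u, v', hu, huv', rfl⟩, ?_⟩
          show Sum.inr _ = Sum.inr (φ₂ (FreeMonoid.ofList v') * φ₂ (FreeMonoid.of a))
          rw [ofList_app', map_mul, ofList_sing']

lemma compNFA_accepts {L₁ L₂ : Language α}
    (h₁ : ∀ w : List α, w ∈ L₁ ↔ φ₁ (FreeMonoid.ofList w) ∈ S₁)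
    (h₂ : ∀ w : List α, w ∈ L₂ ↔ φ₂ (FreeMonoid.ofList w) ∈ S₂) :
    (compNFA M₁ M₂ φ₁ φ₂ S₁ S₂).accepts = L₁ * L₂ := by
  ext w
  rw [NFA.mem_accepts, Language.mem_mul]
  constructor
  · rintro ⟨q, ⟨n, hn, rfl⟩, he⟩
    have := compNFA_eval M₁ M₂ φ₁ φ₂ S₁ S₂ w
    rw [show (compNFA M₁ M₂ φ₁ φ₂ S₁ S₂).evalFrom (compNFA M₁ M₂ φ₁ φ₂ S₁ S₂).start w
      = (compNFA M₁ M₂ φ₁ φ₂ S₁ S₂).eval w from rfl, this] at he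
    rcases he with he | ⟨u, v, hu, huv, he⟩
    · exact absurd he (by simp)
    · obtain rfl : n = φ₂ (FreeMonoid.ofList v) := by injection he
      exact ⟨u, (h₁ u).mpr hu, v, (h₂ v).mpr hn, huv⟩
  · rintro ⟨u, hu, v, hv, rfl⟩
    refine ⟨.inr (φ₂ (FreeMonoid.ofList v)), ⟨_, (h₂ v).mp hv, rfl⟩, ?_⟩
    rw [show (compNFA M₁ M₂ φ₁ φ₂ S₁ S₂).evalFrom (compNFA M₁ M₂ φ₁ φ₂ S₁ S₂).start (u ++ v)
      = (compNFA M₁ M₂ φ₁ φ₂ S₁ S₂).eval (u ++ v) from rfl, compNFA_eval]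
    exact Or.inr ⟨u, v, (h₁ u).mp hu, rfl, rfl⟩
end Comp





lemma kstar_append {α : Type} {L : Language α} {u x : List α} (hu : u ∈ L∗) (hx : x ∈ L) :
    u ++ x ∈ L∗ := by
  rw [Language.mem_kstar] at hu ⊢
  obtain ⟨S, rfl, hS⟩ := hu
  refine ⟨S ++ [x], by simp, ?_⟩
  intro y hy
  rcases List.mem_append.1 hy with h | h
  · exact hS y h
  · simp at h; subst h; exact hx

lemma star_snoc {α : Type} (L : Language α) (w : List α) (a : α) :
    w ++ [a] ∈ L∗ ↔ ∃ u v, u ∈ L∗ ∧ u ++ v = w ∧ v ++ [a] ∈ L := by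
  constructor
  · intro h
    rw [Language.mem_kstar_iff_exists_nonempty] at h
    obtain ⟨S, hflat, hS⟩ := h
    rcases List.eq_nil_or_concat S with rfl | ⟨S', last, rfl⟩
    · simp at hflat
    · rw [List.concat_eq_append, List.flatten_append] at hflat
      simp only [List.flatten_cons, List.flatten_nil, List.append_nil] at hflat
      have hlast := hS last (by simp)
      rcases List.eq_nil_or_concat last with rfl | ⟨v, b, rfl⟩
      · exact absurd rfl hlast.2
      · rw [List.concat_eq_append, ← List.append_assoc] at hflat
        obtain ⟨h1, h2⟩ := List.append_inj' hflat rfl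
        obtain rfl : a = b := by simpa using h2
        refine ⟨S'.flatten, v, ?_, h1.symm, by simpa using hlast.1⟩
        exact Language.join_mem_kstar (fun y hy => (hS y (by simp [hy])).1)
  · rintro ⟨u, v, hu, rfl, hv⟩
    rw [List.append_assoc]
    exact kstar_append hu hv

section Star
variable {α : Type} (M : MonCat.{0}) (φ : FreeMonoid α →* M) (S : Set M)

def starNFA : NFA α (Option M) where
  step q a := {p | p = some ((q.elim 1 id) * φ (.of a)) ∨
    ((q.elim 1 id) * φ (.of a) ∈ S ∧ p = some 1)}
  start := {none}
  accept := {p | p = none ∨ ∃ m ∈ S, p = some m}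

variable {L : Language α} (h : ∀ w : List α, w ∈ L ↔ φ (FreeMonoid.ofList w) ∈ S)

include h in
lemma starNFA_eval (w : List α) (hw : w ≠ []) :
    (starNFA M φ S).eval w =
      {p | ∃ u v, u ∈ L∗ ∧ u ++ v = w ∧ p = some (φ (FreeMonoid.ofList v))} := by
  induction w using List.reverseRecOn with
  | nil => exact absurd rfl hw
  | append_singleton w a ih =>
    rw [NFA.eval_append_singleton]
    rcases eq_or_ne w [] with rfl | hw'
    · show (starNFA M φ S).stepSet {none} a = _
      ext p
      rw [NFA.mem_stepSet]
      constructor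
      · rintro ⟨t, ht, hp⟩
        obtain rfl : t = none := ht
        rcases hp with rfl | ⟨hin, rfl⟩
        · exact ⟨[], [a], Language.nil_mem_kstar L, by simp,
            by simp [ofList_sing', Option.elim]⟩
        · refine ⟨[a], [], ?_, by simp, by simp [ofList_nil', map_one]⟩
          have : [a] ∈ L := (h [a]).mpr (by simpa [ofList_sing'] using hin)
          simpa using kstar_append (Language.nil_mem_kstar L) this
      · rintro ⟨u, v, hu, huv, rfl⟩
        refine ⟨none, rfl, ?_⟩
        rcases u with _ | ⟨b, u⟩
        · simp only [List.nil_append] at huv; subst huv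
          exact Or.inl (by simp [ofList_sing', Option.elim])
        · have : u ++ v = [] := by simpa using congrArg List.tail huv
          rcases List.append_eq_nil_iff.mp this with ⟨rfl, rfl⟩
          obtain rfl : a = b := by simpa using huv.symm
          have : φ (FreeMonoid.of a) ∈ S := by
            have h1 : ([] : List α) ++ [a] ∈ L∗ := by simpa using hu
            rw [star_snoc] at h1
            obtain ⟨u', v', hu', huv', hl⟩ := h1
            rcases List.append_eq_nil_iff.mp huv' with ⟨rfl, rfl⟩
            simpa [ofList_sing'] using (h [a]).mp (by simpa using hl)
          exact Or.inr ⟨by simpa using this, by simp [ofList_nil', map_one]⟩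
    · rw [ih hw']
      ext p
      rw [NFA.mem_stepSet]
      constructor
      · rintro ⟨t, ht, hp⟩
        obtain ⟨u, v, hu, huv, rfl⟩ := ht
        rcases hp with rfl | ⟨hin, rfl⟩
        · exact ⟨u, v ++ [a], hu, by rw [← List.append_assoc, huv],
            by simp [ofList_app', map_mul, ofList_sing', Option.elim]⟩
        · refine ⟨w ++ [a], [], ?_, by simp, by simp [ofList_nil', map_one]⟩
          have hva : v ++ [a] ∈ L := (h _).mpr (by
            simpa [ofList_app', map_mul, ofList_sing'] using hin)
          rw [← huv, List.append_assoc]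
          exact kstar_append hu hva
      · rintro ⟨u, v, hu, huv, rfl⟩
        rcases List.eq_nil_or_concat v with rfl | ⟨v', b, rfl⟩
        · rw [List.append_nil] at huv; subst huv
          rw [star_snoc] at hu
          obtain ⟨u', v', hu', huv', hl⟩ := hu
          refine ⟨some (φ (FreeMonoid.ofList v')), ⟨u', v', hu', huv', rfl⟩, Or.inr ⟨?_, ?_⟩⟩
          · show (Option.elim _ 1 id) * φ (.of a) ∈ S
            simpa [Option.elim, ofList_app', map_mul, ofList_sing'] using (h _).mp hl
          · simp [ofList_nil', map_one]
        · rw [List.concat_eq_append, ← List.append_assoc] at huv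
          obtain ⟨h1, h2⟩ := List.append_inj' huv rfl
          obtain rfl : a = b := by simpa using h2.symm
          refine ⟨some (φ (FreeMonoid.ofList v')), ⟨u, v', hu, h1, rfl⟩, Or.inl ?_⟩
          show some _ = some ((Option.elim _ 1 id) * φ (.of a))
          simp [Option.elim, ofList_app', map_mul, ofList_sing']

include h in
lemma starNFA_accepts : (starNFA M φ S).accepts = L∗ := by
  ext w
  rw [NFA.mem_accepts]
  rcases eq_or_ne w [] with rfl | hw
  · simp only [NFA.evalFrom_nil]
    constructor
    · intro _; exact Language.nil_mem_kstar L
    · intro _; exact ⟨none, Or.inl rfl, rfl⟩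
  · have he := starNFA_eval M φ S h w hw
    rw [show (starNFA M φ S).evalFrom (starNFA M φ S).start w = (starNFA M φ S).eval w from rfl,
      he]
    constructor
    · rintro ⟨q, hq, ⟨u, v, hu, huv, rfl⟩⟩
      rcases hq with hq | ⟨m, hm, hq⟩
      · cases hq
      · obtain rfl : φ (FreeMonoid.ofList v) = m := by injection hq
        rw [← huv]
        exact kstar_append hu ((h v).mpr hm)
    · intro hws
      rcases List.eq_nil_or_concat w with rfl | ⟨w', a, rfl⟩
      · exact absurd rfl hw
      · rw [List.concat_eq_append] at hws ⊢
        rw [star_snoc] at hws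
        obtain ⟨u, v, hu, huv, hl⟩ := hws
        refine ⟨some (φ (FreeMonoid.ofList (v ++ [a]))),
          Or.inr ⟨_, (h _).mp hl, rfl⟩,
          ⟨u, v ++ [a], hu, by rw [← List.append_assoc, huv], rfl⟩⟩
end Star

theorem stmt11 {α : Type} (E : RegularExpression α) :
    ∃ (M : MonCat) (_ : Finite M) (φ : FreeMonoid α →* M) (S : Set M),
      ∀ w : List α, w ∈ E.matches' ↔ φ (FreeMonoid.ofList w) ∈ S := by
  suffices hr : Recog E.matches' by
    obtain ⟨M, f, φ, S, hS⟩ := hr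
    haveI := f
    refine ⟨MonCat.of (ULift M), (inferInstance : Finite (ULift ↑M)),
      (MulEquiv.ulift.symm.toMonoidHom : ↑M →* ULift ↑M).comp φ, {x | x.down ∈ S}, fun w => ?_⟩
    exact hS w
  induction E with
  | zero => exact recog_zero
  | epsilon =>
    show Recog (1 : Language α)
    rw [← epsNFA_accepts]
    exact nfa_recog _
  | char a =>
    show Recog ({[a]} : Language α)
    rw [← charNFA_accepts a]
    exact nfa_recog _
  | plus P Q ihP ihQ => exact recog_plus ihP ihQ
  | comp P Q ihP ihQ =>
    obtain ⟨M₁, f₁, φ₁, S₁, h₁⟩ := ihP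
    obtain ⟨M₂, f₂, φ₂, S₂, h₂⟩ := ihQ
    haveI := f₁; haveI := f₂
    show Recog (P.matches' * Q.matches')
    rw [← compNFA_accepts M₁ M₂ φ₁ φ₂ S₁ S₂ h₁ h₂]
    exact nfa_recog _
  | star P ihP =>
    obtain ⟨M, f, φ, S, h⟩ := ihP
    haveI := f
    haveI : Finite (Option ↑M) := Finite.of_equiv _ (Equiv.optionEquivSumPUnit.{0,0} ↑M).symm
    show Recog (P.matches'∗)
    rw [← starNFA_accepts M φ S h]
    exact nfa_recog _
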